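/- Fix reals α > 0 and 0 < β < 1 and an integer l ≥ 1, define τ(d, q) = 1 if q divides d^l and τ(d, q) = max{−α r^{−β}, −1} otherwise (r = q / gcd(q, d^l)), and set λ = 2^{−β}. There exists a constant c_2 > 0 depending only on α and β such that for every positive integer s and every prime p ≤ 2^s there exist integers 0 = a_0 ≤ a_1 ≤ ... ≤ a_s such that p^{a_s} < 2^{c_2 s} and, for every positive integer k, ∑_{j=0}^{s} λ^j τ(p^{a_j}, p^k) ≥ −((1 + α)/(1 − λ)) λ^{s+1}. -/

import Mathlib

/-- `τ(d, q) = 1` if `q ∣ d^l`, and `max{−a r^{−b}, −1}` otherwise, where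
`r = q / gcd(q, d^l)`. -/
noncomputable def tau (a b : ℝ) (l d q : ℕ) : ℝ :=
  if q ∣ d ^ l then 1
  else max (-(a * ((q / Nat.gcd q (d ^ l) : ℕ) : ℝ) ^ (-b))) (-1)

/-- With `λ = 2^{−b}`, there is `c₂ > 0` depending only on `a, b`
such that for every `s ≥ 1` and prime `p ≤ 2^s` there are exponents
`0 = a₀ ≤ a₁ ≤ ... ≤ a_s` with `p^{a_s} < 2^{c₂ s}` and, for every `k ≥ 1`,
`∑_{j=0}^{s} λ^j τ(p^{a_j}, p^k) ≥ −((1 + a)/(1 − λ)) λ^{s+1}`. -/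
theorem stmt_16 (a b : ℝ) (l : ℕ) (ha : 0 < a) (hb0 : 0 < b) (hb1 : b < 1) (hl : 1 ≤ l) :
    ∃ c2 : ℝ, 0 < c2 ∧ ∀ s : ℕ, 1 ≤ s → ∀ p : ℕ, p.Prime → p ≤ 2 ^ s →
      ∃ e : ℕ → ℕ, e 0 = 0 ∧ (∀ j, j < s → e j ≤ e (j + 1)) ∧
        (p : ℝ) ^ (e s) < (2 : ℝ) ^ (c2 * (s : ℝ)) ∧
        ∀ k : ℕ, 1 ≤ k →
          -((1 + a) / (1 - (2 : ℝ) ^ (-b)) * ((2 : ℝ) ^ (-b)) ^ (s + 1)) ≤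
            ∑ j ∈ Finset.range (s + 1),
              ((2 : ℝ) ^ (-b)) ^ j * tau a b l (p ^ (e j)) (p ^ k) := by
  have h2 : (1:ℝ) < 2 := one_lt_two
  set lam : ℝ := (2:ℝ) ^ (-b) with hlam
  have hlam_pos : 0 < lam := Real.rpow_pos_of_pos two_pos _
  have hlam_lt1 : lam < 1 := Real.rpow_lt_one_of_one_lt_of_neg h2 (by linarith)
  have hlam_ne1 : lam ≠ 1 := ne_of_lt hlam_lt1
  have hhalf : (1:ℝ)/2 < lam := by
    have h := Real.rpow_lt_rpow_of_exponent_lt h2 (show (-1:ℝ) < -b by linarith)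
    rw [Real.rpow_neg_one] at h
    rw [hlam]
    linarith [h]
  set nu : ℝ := (2:ℝ) ^ (-(b/2)) with hnu
  have hnu_pos : 0 < nu := Real.rpow_pos_of_pos two_pos _
  have hnu_lt1 : nu < 1 := Real.rpow_lt_one_of_one_lt_of_neg h2 (by linarith)
  have hlamnu : ∀ n : ℕ, lam ^ n = nu ^ (2*n) := by
    intro n
    rw [hlam, hnu, ← Real.rpow_natCast ((2:ℝ)^(-b)) n,
      ← Real.rpow_natCast ((2:ℝ)^(-(b/2))) (2*n),
      ← Real.rpow_mul two_pos.le, ← Real.rpow_mul two_pos.le]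
    congr 1
    push_cast
    ring
  have hcastpow : ∀ n : ℕ, ((2:ℝ)^(n:ℕ)) ^ (-b) = lam ^ n := by
    intro n
    rw [hlam, ← Real.rpow_natCast (2:ℝ) n, ← Real.rpow_mul two_pos.le, mul_comm,
      Real.rpow_mul two_pos.le, Real.rpow_natCast]
  -- choose c
  have hden : (0:ℝ) < 2*lam - 1 := by linarith
  have h1lam : (0:ℝ) < 1 - lam := by linarith
  have hepspos : (0:ℝ) < min (lam/2) (lam*(2*lam-1)/(2*a*(1-lam))) := by
    apply lt_min
    · positivity
    · positivity
  obtain ⟨c, hc⟩ := exists_pow_lt_of_lt_one hepspos hnu_lt1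
  have hc1 : nu ^ c < lam/2 := lt_of_lt_of_le hc (min_le_left _ _)
  have hc2 : nu ^ c < lam*(2*lam-1)/(2*a*(1-lam)) := lt_of_lt_of_le hc (min_le_right _ _)
  set rho : ℝ := nu ^ c / lam with hrho
  have hrho_nonneg : 0 ≤ rho := by positivity
  have hrho_half : rho ≤ 1/2 := by
    rw [hrho, div_le_div_iff₀ hlam_pos two_pos]
    nlinarith [hc1]
  have h2arho : 2*(a*rho) ≤ (2*lam - 1)/(1-lam) := by
    have hmul := mul_lt_mul_of_pos_left hc2 (show (0:ℝ) < 2*a/lam by positivity)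
    have heq1 : 2*a/lam * (lam*(2*lam-1)/(2*a*(1-lam))) = (2*lam-1)/(1-lam) := by
      field_simp
    have heq2 : 2*a/lam * nu^c = 2*(a*rho) := by
      rw [hrho]; field_simp
    rw [heq1, heq2] at hmul
    exact hmul.le
  refine ⟨(c:ℝ)+2, by positivity, ?_⟩
  intro s hs p hp hps
  have hp2 : 2 ≤ p := hp.two_le
  set m := Nat.clog 2 p with hm
  have hm1 : 1 ≤ m := Nat.clog_pos one_lt_two hp2
  have hms : m ≤ s := by
    have h3 := Nat.clog_mono_right 2 hps
    rwa [Nat.clog_pow 2 s one_lt_two] at h3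
  have hple : p ≤ 2 ^ m := Nat.le_pow_clog one_lt_two p
  set h : ℕ := (m+1)/2 with hh
  have hhp : 2 ^ h ≤ p := by
    rcases eq_or_lt_of_le hm1 with h1 | h1
    · have hh1 : h = 1 := by omega
      rw [hh1, pow_one]; exact hp2
    · have hlt : 2 ^ (m-1) < p := Nat.pow_pred_clog_lt_self one_lt_two (by omega)
      calc 2^h ≤ 2^(m-1) := Nat.pow_le_pow_right (by norm_num) (by omega)
        _ ≤ p := le_of_lt hlt
  set e : ℕ → ℕ := fun j => (c*j + (m-1))/m with he
  have he0 : e 0 = 0 := by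
    rw [he]
    simp only [Nat.mul_zero, Nat.zero_add]
    exact Nat.div_eq_of_lt (by omega)
  have hemono : ∀ x y : ℕ, x ≤ y → e x ≤ e y := by
    intro x y hxy
    rw [he]
    apply Nat.div_le_div_right
    have : c * x ≤ c * y := Nat.mul_le_mul_left c hxy
    omega
  have hediv : ∀ x y : ℕ, e x + c*y/m ≤ e (x+y) := by
    intro x y
    rw [he]
    simp only
    rw [Nat.le_div_iff_mul_le (show 0 < m by omega)]
    have h1 : ((c*x + (m-1))/m) * m ≤ c*x + (m-1) := Nat.div_mul_le_self _ _
    have h2' : (c*y/m) * m ≤ c*y := Nat.div_mul_le_self _ _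
    calc ((c*x + (m-1))/m + c*y/m) * m
        = ((c*x + (m-1))/m) * m + (c*y/m) * m := add_mul _ _ _
      _ ≤ (c*x + (m-1)) + c*y := Nat.add_le_add h1 h2'
      _ = c*(x+y) + (m-1) := by ring
  refine ⟨e, he0, ?_, ?_, ?_⟩
  · intro j _
    exact hemono j (j+1) (by omega)
  · -- size bound
    have hA : m * e s ≤ c*s + (m-1) := by
      rw [he]
      simp only
      rw [mul_comm]
      exact Nat.div_mul_le_self _ _
    have hexp : m * e s < (c+2)*s := by
      have : (c+2)*s = c*s + 2*s := by ring
      omega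
    calc (p:ℝ) ^ (e s) ≤ ((2:ℝ)^m) ^ (e s) := by
          apply pow_le_pow_left₀ (by positivity)
          exact_mod_cast hple
      _ = (2:ℝ) ^ (m * e s) := (pow_mul 2 m (e s)).symm
      _ < (2:ℝ) ^ (((c:ℝ)+2) * s) := by
          rw [← Real.rpow_natCast 2 (m * e s)]
          apply Real.rpow_lt_rpow_of_exponent_lt h2
          have := hexp
          push_cast
          exact_mod_cast hexp
  · intro k hk
    -- existence of the threshold J
    obtain ⟨J, hJ1, hJs, hJlt, hJge⟩ :
        ∃ J, 1 ≤ J ∧ J ≤ s + 1 ∧ (∀ j, j < J → l * e j < k) ∧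
          (∀ j, J ≤ j → j ≤ s → k ≤ l * e j) := by
      by_cases H : ∃ j, j ≤ s ∧ k ≤ l * e j
      · refine ⟨Nat.find H, ?_, ?_, ?_, ?_⟩
        · rcases Nat.eq_zero_or_pos (Nat.find H) with h0 | h0
          · exfalso
            have := (Nat.find_spec H).2
            rw [h0, he0] at this
            omega
          · omega
        · exact Nat.le_succ_of_le (Nat.find_spec H).1
        · intro j hj
          have hnj := Nat.find_min H hj
          push_neg at hnj
          have hjs' : j ≤ s := le_trans (le_of_lt hj) (Nat.find_spec H).1
          exact hnj hjs'
        · intro j hJj _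
          exact le_trans (Nat.find_spec H).2 (Nat.mul_le_mul_left l (hemono _ _ hJj))
      · push_neg at H
        exact ⟨s+1, by omega, le_refl _, fun j hj => H j (by omega), fun j h1 h2' => by omega⟩
    have htau_one : ∀ j, J ≤ j → j ≤ s → tau a b l (p ^ e j) (p ^ k) = 1 := by
      intro j h1 h2'
      rw [tau, if_pos]
      rw [← pow_mul]
      exact pow_dvd_pow p (by have := hJge j h1 h2'; rwa [Nat.mul_comm] at this)
    have htau_neg1 : ∀ d q : ℕ, -1 ≤ tau a b l d q := by
      intro d q
      rw [tau]
      split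
      · norm_num
      · exact le_max_right _ _
    have htau_lb : ∀ j, j < J → -(a * nu ^ (c * (J - 1 - j))) ≤ tau a b l (p ^ e j) (p ^ k) := by
      intro j hj
      have hjlt : l * e j < k := hJlt j hj
      have hejl : e j * l < k := by rwa [Nat.mul_comm] at hjlt
      have hdvd_false : ¬ (p ^ k ∣ (p ^ e j) ^ l) := by
        rw [← pow_mul, Nat.pow_dvd_pow_iff_le_right hp.one_lt]
        omega
      rw [tau, if_neg hdvd_false]
      apply le_trans _ (le_max_left _ _)
      -- compute r
      have hgcd : Nat.gcd (p^k) ((p^(e j))^l) = p^(e j * l) := by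
        rw [← pow_mul, Nat.gcd_comm, Nat.gcd_eq_left (pow_dvd_pow p hejl.le)]
      rw [hgcd, Nat.pow_div hejl.le (by omega)]
      set D : ℕ := k - e j * l with hD
      set i : ℕ := J - 1 - j with hi
      -- key natural number inequality : c * i ≤ 2 * (h * D)
      have hkey : c * i ≤ 2 * (h * D) := by
        apply le_of_lt
        have hji : j + i = J - 1 := by omega
        have hei : e j + c*i/m ≤ e (J-1) := by
          have := hediv j i
          rwa [hji] at this
        set w : ℕ := c*i/m with hw
        have hwm := Nat.div_add_mod (c*i) m
        have hwlt : (c*i) % m < m := Nat.mod_lt _ (by omega)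
        have h2h : m ≤ 2*h := by omega
        have hJ1lt : l * e (J-1) < k := hJlt (J-1) (by omega)
        have hstep : e j * l + w < k := by
          have h5 : (e j + w) * l ≤ e (J-1) * l := Nat.mul_le_mul_right l hei
          have h6 : (e j + w) * l = e j * l + w * l := add_mul _ _ _
          have h7 : w ≤ w * l := Nat.le_mul_of_pos_right w (by omega)
          have h8 : e (J-1) * l < k := by rw [mul_comm]; exact hJ1lt
          omega
        have hD1 : w + 1 ≤ D := by omega
        calc c * i = m * w + (c*i) % m := hwm.symm
          _ < m * w + m := by omega
          _ = m * (w+1) := by ring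
          _ ≤ (2*h) * (w+1) := Nat.mul_le_mul_right _ h2h
          _ = 2 * (h * (w+1)) := by ring
          _ ≤ 2 * (h * D) := by
              apply Nat.mul_le_mul_left
              exact Nat.mul_le_mul_left h hD1
      -- real estimate
      have hbase : ((2:ℝ)^(h*D) : ℝ) ≤ ((p ^ D : ℕ) : ℝ) := by
        have : (2^h)^D ≤ p^D := Nat.pow_le_pow_left hhp D
        rw [← pow_mul] at this
        exact_mod_cast this
      have hrpow : ((p ^ D : ℕ) : ℝ) ^ (-b) ≤ ((2:ℝ)^(h*D)) ^ (-b) := by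
        apply Real.rpow_le_rpow_of_nonpos (by positivity) hbase (by linarith)
      have hnub : ((2:ℝ)^(h*D)) ^ (-b) ≤ nu ^ (c * i) := by
        rw [hcastpow (h*D), hlamnu (h*D)]
        exact pow_le_pow_of_le_one hnu_pos.le hnu_lt1.le hkey
      have : a * ((p ^ D : ℕ) : ℝ) ^ (-b) ≤ a * nu ^ (c*i) := by
        apply mul_le_mul_of_nonneg_left _ ha.le
        exact le_trans hrpow hnub
      linarith
    -- sum manipulation
    set T : ℕ → ℝ := fun j => lam^j * tau a b l (p^(e j)) (p^k) with hT
    have hsplit : ∑ j ∈ Finset.range (s+1), T j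
        = ∑ j ∈ Finset.range J, T j + ∑ j ∈ Finset.Ico J (s+1), T j :=
      (Finset.sum_range_add_sum_Ico T hJs).symm
    have hP2 : ∑ j ∈ Finset.Ico J (s+1), T j = (lam^(s+1) - lam^J)/(lam - 1) := by
      rw [Finset.sum_congr rfl (fun j hj => ?_), geom_sum_Ico hlam_ne1 hJs]
      rw [Finset.mem_Ico] at hj
      rw [hT]
      simp only
      rw [htau_one j hj.1 (by omega), mul_one]
    -- the u-bound
    set u : ℕ → ℝ := fun i => if i = 0 then 1 else a * rho^i with hu
    have husum : ∑ i ∈ Finset.range J, u i ≤ lam/(1-lam) := by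
      have hsplitu : ∑ i ∈ Finset.range J, u i
          = ∑ i ∈ Finset.range 1, u i + ∑ i ∈ Finset.Ico 1 J, u i :=
        (Finset.sum_range_add_sum_Ico u hJ1).symm
      have hu0 : ∑ i ∈ Finset.range 1, u i = 1 := by
        rw [Finset.sum_range_one, hu]
        simp
      have htail : ∑ i ∈ Finset.Ico 1 J, u i ≤ 2*(a*rho) := by
        have hb1' : ∀ i ∈ Finset.Ico 1 J, u i ≤ (a*rho) * (1/2:ℝ)^(i-1) := by
          intro i hi
          rw [Finset.mem_Ico] at hi
          rw [hu]
          simp only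
          rw [if_neg (by omega)]
          have : rho ^ i = rho * rho^(i-1) := by
            rw [← pow_succ']
            congr 1
            omega
          rw [this]
          have hle : rho^(i-1) ≤ (1/2:ℝ)^(i-1) := pow_le_pow_left₀ hrho_nonneg hrho_half _
          calc a * (rho * rho^(i-1)) = (a*rho) * rho^(i-1) := by ring
            _ ≤ (a*rho) * (1/2:ℝ)^(i-1) := by
                apply mul_le_mul_of_nonneg_left hle (by positivity)
        calc ∑ i ∈ Finset.Ico 1 J, u i
            ≤ ∑ i ∈ Finset.Ico 1 J, (a*rho) * (1/2:ℝ)^(i-1) := Finset.sum_le_sum hb1'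
          _ = (a*rho) * ∑ i ∈ Finset.Ico 1 J, (1/2:ℝ)^(i-1) := by rw [Finset.mul_sum]
          _ ≤ (a*rho) * 2 := by
              apply mul_le_mul_of_nonneg_left _ (by positivity)
              rw [Finset.sum_Ico_eq_sum_range]
              simp only [Nat.add_sub_cancel_left]
              exact sum_geometric_two_le _
          _ = 2*(a*rho) := by ring
      have hid : 1 + (2*lam-1)/(1-lam) = lam/(1-lam) := by
        field_simp
        ring
      linarith
    -- per-term bound
    have hterm : ∀ i ∈ Finset.range J, -(lam^(J-1) * u i) ≤ T (J-1-i) := by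
      intro i hi
      rw [Finset.mem_range] at hi
      rcases Nat.eq_zero_or_pos i with h0 | h0
      · rw [h0, hu]
        simp only [if_true, eq_self_iff_true, ite_true, Nat.sub_zero, mul_one]
        rw [hT]
        simp only
        have hm1' := htau_neg1 (p ^ (e (J-1))) (p^k)
        have hpow : (0:ℝ) ≤ lam^(J-1) := by positivity
        have hmul := mul_le_mul_of_nonneg_left hm1' hpow
        linarith
      · have hjJ : J - 1 - i < J := by omega
        have hidx : J - 1 - (J-1-i) = i := by omega
        have hlb := htau_lb (J-1-i) hjJ
        rw [hidx] at hlb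
        rw [hT]
        simp only
        have heq : lam^(J-1) * u i = lam^(J-1-i) * (a * nu^(c*i)) := by
          rw [hu]
          simp only [if_neg (by omega : ¬ i = 0)]
          have hJsplit : lam^(J-1) = lam^(J-1-i) * lam^i := by
            rw [← pow_add]
            congr 1
            omega
          rw [hJsplit, hrho, div_pow, ← pow_mul]
          field_simp
        rw [heq]
        have hpow : (0:ℝ) ≤ lam^(J-1-i) := by positivity
        have hmul := mul_le_mul_of_nonneg_left hlb hpow
        linarith
    have hP1 : -(lam^J / (1-lam)) ≤ ∑ j ∈ Finset.range J, T j := by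
      rw [← Finset.sum_range_reflect T J]
      have hstep1 : ∑ i ∈ Finset.range J, -(lam^(J-1) * u i) ≤ ∑ i ∈ Finset.range J, T (J-1-i) :=
        Finset.sum_le_sum hterm
      have hstep2 : -(lam^J / (1-lam)) ≤ ∑ i ∈ Finset.range J, -(lam^(J-1) * u i) := by
        rw [Finset.sum_neg_distrib, ← Finset.mul_sum]
        have hmul : lam^(J-1) * (∑ i ∈ Finset.range J, u i) ≤ lam^(J-1) * (lam/(1-lam)) :=
          mul_le_mul_of_nonneg_left husum (by positivity)
        have hpows : lam^(J-1) * (lam/(1-lam)) = lam^J/(1-lam) := by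
          rw [← mul_div_assoc, ← pow_succ]
          congr 2
          omega
        linarith
      linarith
    -- final assembly
    rw [hsplit, hP2]
    have e1 : -(lam^J/(1-lam)) + (lam^(s+1) - lam^J)/(lam-1) = -(lam^(s+1)/(1-lam)) := by
      have hne : lam - 1 ≠ 0 := by linarith
      have hne2 : (1:ℝ) - lam ≠ 0 := by linarith
      field_simp
      ring
    have e2 : -((1+a)/(1-lam)*lam^(s+1)) = -(lam^(s+1)/(1-lam)) - a*lam^(s+1)/(1-lam) := by
      have hne2 : (1:ℝ) - lam ≠ 0 := by linarith
      field_simp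
      ring
    have hnn : 0 ≤ a*lam^(s+1)/(1-lam) := by positivity
    rw [e2]
    linarith [hP1, e1]
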